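/- arXiv:2001.04823 — 14 statements merged into one kernel-verified Lean document; each statement's English description precedes it below -/
import Mathlib

section
/- Let A be a commutative ring and p a prime ideal of A. Then the pure part ν(p) is a purely-prime ideal of A, and ν(p) = ν(Ker π_p), where π_p : A → A_p is the canonical localization map. -/
variable {A : Type*} [CommRing A]

/-- An ideal `I` is pure if for every `f ∈ I` there exists `g ∈ I` with `f * (1 - g) = 0`. -/
def Ideal.IsPure (I : Ideal A) : Prop :=
  ∀ f ∈ I, ∃ g ∈ I, f * (1 - g) = 0

/-- The pure part `ν(I)`: the largest pure ideal contained in `I`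
(the sum of all pure ideals contained in `I`). -/
def Ideal.purePart (I : Ideal A) : Ideal A :=
  sSup {J : Ideal A | J.IsPure ∧ J ≤ I}

/-- A purely-prime ideal: a proper pure ideal `P` such that whenever `I`, `J` are pure ideals
with `I * J ≤ P`, either `I ≤ P` or `J ≤ P`. -/
def Ideal.IsPurelyPrime (P : Ideal A) : Prop :=
  P.IsPure ∧ P ≠ ⊤ ∧
    ∀ I J : Ideal A, I.IsPure → J.IsPure → I * J ≤ P → I ≤ P ∨ J ≤ P

/-- A purely-maximal ideal: a maximal element of the set of proper pure ideals. -/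
def Ideal.IsPurelyMaximal (P : Ideal A) : Prop :=
  P.IsPure ∧ P ≠ ⊤ ∧
    ∀ Q : Ideal A, Q.IsPure → Q ≠ ⊤ → P ≤ Q → P = Q

/-- A Gelfand ring: every prime ideal is contained in a unique maximal ideal. -/
def IsGelfandRing (A : Type*) [CommRing A] : Prop :=
  ∀ p : Ideal A, p.IsPrime → ∃! m : Ideal A, m.IsMaximal ∧ p ≤ m

/-- An mp-ring: every prime ideal contains a unique minimal prime ideal. -/
def IsMpRing (A : Type*) [CommRing A] : Prop :=
  ∀ p : Ideal A, p.IsPrime → ∃! q : Ideal A, q ∈ minimalPrimes A ∧ q ≤ p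

/-- The kernel of the canonical map `A → A_p` to the localization at a prime `p`. -/
def Ideal.kerPi (p : Ideal A) (hp : p.IsPrime) : Ideal A :=
  letI := hp
  RingHom.ker (algebraMap A (Localization.AtPrime p))

/-- The unit part `u(I) = {f : f = f * g for some g ∈ I}`. -/
def Ideal.unitPart (I : Ideal A) : Ideal A where
  carrier := {f | ∃ g ∈ I, f = f * g}
  zero_mem' := ⟨0, I.zero_mem, by ring⟩
  add_mem' := by
    rintro a b ⟨g, hg, ha⟩ ⟨h, hh, hb⟩
    exact ⟨g + h - g * h, I.sub_mem (I.add_mem hg hh) (I.mul_mem_right h hg),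
      by linear_combination (1 - h) * ha + (1 - g) * hb⟩
  smul_mem' := by
    rintro c a ⟨g, hg, ha⟩
    exact ⟨g, hg, by rw [smul_eq_mul]; linear_combination c * ha⟩


lemma Ideal.IsPure.bot' : (⊥ : Ideal A).IsPure := by
  intro f hf
  exact ⟨0, Ideal.zero_mem ⊥, by simp_all⟩

lemma Ideal.IsPure.sup {I J : Ideal A} (hI : I.IsPure) (hJ : J.IsPure) :
    (I ⊔ J).IsPure := by
  intro f hf
  obtain ⟨a, ha, b, hb, hab⟩ := Submodule.mem_sup.mp hf
  obtain ⟨g, hg, hag⟩ := hI a ha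
  obtain ⟨h, hh, hbh⟩ := hJ b hb
  refine ⟨g + h - g * h, ?_, ?_⟩
  · exact Ideal.sub_mem _ (Ideal.add_mem _ (Ideal.mem_sup_left hg) (Ideal.mem_sup_right hh))
      (Ideal.mul_mem_right h _ (Ideal.mem_sup_left hg))
  · linear_combination (1 - h) * hag + (1 - g) * hbh - ((1 - g) * (1 - h)) * hab

lemma Ideal.purePart_isPure (I : Ideal A) : I.purePart.IsPure := by
  intro f hf
  have hne : {J : Ideal A | J.IsPure ∧ J ≤ I}.Nonempty := ⟨⊥, Ideal.IsPure.bot', bot_le⟩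
  have hdir : DirectedOn (· ≤ ·) {J : Ideal A | J.IsPure ∧ J ≤ I} := by
    rintro J₁ ⟨h₁, l₁⟩ J₂ ⟨h₂, l₂⟩
    exact ⟨J₁ ⊔ J₂, ⟨h₁.sup h₂, sup_le l₁ l₂⟩, le_sup_left, le_sup_right⟩
  obtain ⟨J, hJ, hfJ⟩ := (Submodule.mem_sSup_of_directed hne hdir).mp hf
  obtain ⟨g, hg, hfg⟩ := hJ.1 f hfJ
  exact ⟨g, le_sSup hJ hg, hfg⟩

lemma Ideal.purePart_le (I : Ideal A) : I.purePart ≤ I :=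
  sSup_le fun _ hJ => hJ.2

lemma Ideal.le_purePart {I J : Ideal A} (hJ : J.IsPure) (h : J ≤ I) : J ≤ I.purePart :=
  le_sSup ⟨hJ, h⟩

/-- For a prime ideal `p`, the pure part `ν(p)` is purely-prime and
`ν(p) = ν(Ker π_p)`. -/
theorem purePart_of_prime_isPurelyPrime_and_eq_purePart_kerPi
    (p : Ideal A) (hp : p.IsPrime) :
    p.purePart.IsPurelyPrime ∧ p.purePart = (p.kerPi hp).purePart := by
  letI := hp
  -- ker π_p ≤ p
  have hker_le : p.kerPi hp ≤ p := by
    intro f hf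
    have hf0 : algebraMap A (Localization.AtPrime p) f = 0 := hf
    obtain ⟨s, hs⟩ :=
      (IsLocalization.map_eq_zero_iff p.primeCompl (Localization.AtPrime p) f).mp hf0
    have hmem : (s : A) * f ∈ p := hs ▸ p.zero_mem
    rcases hp.mem_or_mem hmem with h | h
    · exact absurd h s.2
    · exact h
  -- ν(p) ≤ ker π_p
  have hpure_le_ker : p.purePart ≤ p.kerPi hp := by
    intro f hf
    obtain ⟨g, hg, hfg⟩ := p.purePart_isPure f hf
    have hgp : g ∈ p := p.purePart_le hg
    have h1g : (1 - g) ∈ p.primeCompl := by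
      intro hcon
      exact hp.ne_top (Ideal.eq_top_of_isUnit_mem p
        (by simpa using p.add_mem hcon hgp) isUnit_one)
    show algebraMap A (Localization.AtPrime p) f = 0
    exact (IsLocalization.map_eq_zero_iff p.primeCompl (Localization.AtPrime p) f).mpr
      ⟨⟨1 - g, h1g⟩, by linear_combination hfg⟩
  constructor
  · refine ⟨p.purePart_isPure, ?_, ?_⟩
    · intro htop
      exact hp.ne_top (top_le_iff.mp (htop ▸ p.purePart_le))
    · intro I J hI hJ hIJ
      rcases hp.mul_le.mp (hIJ.trans p.purePart_le) with h | h
      · exact Or.inl (Ideal.le_purePart hI h)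
      · exact Or.inr (Ideal.le_purePart hJ h)
  · refine le_antisymm ?_ ?_
    · exact Ideal.le_purePart (p.purePart_isPure) hpure_le_ker
    · exact Ideal.le_purePart ((p.kerPi hp).purePart_isPure)
        (((p.kerPi hp).purePart_le).trans hker_le)
end

section
/- Let A be a commutative ring and let p ⊆ q be prime ideals of A. Then the pure parts coincide: ν(p) = ν(q). -/
variable {A : Type*} [CommRing A]

/-- If `p ⊆ q` are prime ideals, then `ν(p) = ν(q)`. -/
theorem purePart_eq_of_prime_le_prime
    (p q : Ideal A) (hp : p.IsPrime) (hq : q.IsPrime) (hpq : p ≤ q) :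
    p.purePart = q.purePart := by
  unfold Ideal.purePart
  congr 1
  ext J
  constructor
  · rintro ⟨h1, h2⟩
    exact ⟨h1, h2.trans hpq⟩
  · rintro ⟨h1, h2⟩
    refine ⟨h1, fun f hf => ?_⟩
    obtain ⟨g, hg, hfg⟩ := h1 f hf
    have hmem : f * (1 - g) ∈ p := hfg ▸ p.zero_mem
    rcases hp.mem_or_mem hmem with h | h
    · exact h
    · exfalso
      have : (1 : A) ∈ q := by
        have := q.add_mem (hpq h) (h2 hg)
        simpa using this
      exact hq.ne_top (q.eq_top_iff_one.mpr this)
end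

section
/- Let I be an ideal of a commutative ring A such that the radical √I is a pure ideal. Then I = √I. -/
variable {A : Type*} [CommRing A]

/-- If the radical of `I` is a pure ideal, then `I = √I`. -/
theorem eq_radical_of_radical_isPure (I : Ideal A) (h : I.radical.IsPure) :
    I = I.radical := by
  refine le_antisymm I.le_radical fun f hf => ?_
  obtain ⟨g, hg, hfg⟩ := h f hf
  have hfg' : f = f * g := by linear_combination hfg
  obtain ⟨n, hn⟩ := hg
  have key : ∀ m : ℕ, f = f * g ^ m := by
    intro m
    induction m with
    | zero => simp
    | succ k ih => rw [pow_succ, ← mul_assoc, ← ih]; exact hfg'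
  rw [key n]
  exact I.mul_mem_left f hn
end

section
/- Let A be a reduced commutative ring and I a pure ideal of A. Then I = {f ∈ A : D(f) ⊆ Supp(I)}; explicitly, an element f ∈ A belongs to I if and only if for every prime ideal p of A with f ∉ p there exists some g ∈ I with Ann(g) ⊆ p. -/
variable {A : Type*} [CommRing A]

/-- If `I` is a pure ideal of a reduced ring `A`, then
`I = {f : D(f) ⊆ Supp I}`: an element `f` belongs to `I` iff for every prime `p`
with `f ∉ p` there exists `g ∈ I` with `Ann(g) ⊆ p`. -/
theorem pure_ideal_eq_of_isReduced [IsReduced A] (I : Ideal A) (hI : I.IsPure) :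
    ∀ f : A, f ∈ I ↔
      ∀ p : Ideal A, p.IsPrime → f ∉ p → ∃ g ∈ I, ∀ a : A, a * g = 0 → a ∈ p := by
  intro f
  constructor
  · intro hf p hp hfp
    obtain ⟨g, hg, hfg⟩ := hI f hf
    refine ⟨g, hg, fun a ha => ?_⟩
    have haf : a * f = 0 := by linear_combination a * hfg + f * ha
    rcases hp.mem_or_mem (show a * f ∈ p by rw [haf]; exact p.zero_mem) with h | h
    · exact h
    · exact absurd h hfp
  · intro h
    by_contra hfI
    have hJ : I.colon (Ideal.span {f}) ≠ ⊤ := by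
      intro ht
      have : (1 : A) ∈ I.colon (Ideal.span {f}) := ht ▸ Submodule.mem_top
      exact hfI (by simpa using Ideal.mem_colon_span_singleton.mp this)
    obtain ⟨m, hm, hJm⟩ := Ideal.exists_le_maximal _ hJ
    have hIm : I ≤ m := fun a ha => hJm (Ideal.mem_colon_span_singleton.mpr (I.mul_mem_right f ha))
    have h1m : (1 : A) ∉ m := fun h1 => hm.ne_top ((Ideal.eq_top_iff_one m).mpr h1)
    have hmp : m.IsPrime := hm.isPrime
    set S : Submonoid A :=
      { carrier := {t | ∃ s, s ∉ m ∧ ∃ n : ℕ, t = s * f ^ n}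
        one_mem' := ⟨1, h1m, 0, by ring⟩
        mul_mem' := by
          rintro x y ⟨s, hs, n, rfl⟩ ⟨s', hs', n', rfl⟩
          refine ⟨s * s', fun hss' => ?_, n + n', by ring⟩
          exact (hmp.mem_or_mem hss').elim hs hs' } with hS
    by_cases h0 : (0 : A) ∈ S
    · obtain ⟨s, hs, n, h0⟩ := h0
      have hsf : s * f = 0 := by
        have : (s * f) ^ (n + 1) = 0 := by
          have : (s * f) ^ (n + 1) = s ^ n * f * (s * f ^ n) := by ring
          rw [this, ← h0, mul_zero]
        exact IsNilpotent.eq_zero ⟨n + 1, this⟩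
      exact hs (hJm (Ideal.mem_colon_span_singleton.mpr (by rw [hsf]; exact I.zero_mem)))
    · have hdisj : Disjoint ((⊥ : Ideal A) : Set A) (S : Set A) := by
        rw [Set.disjoint_left]
        rintro x hx hxS
        rw [SetLike.mem_coe, Ideal.mem_bot] at hx
        exact h0 (hx ▸ hxS)
      obtain ⟨p, hp, -, hpS⟩ := Ideal.exists_le_prime_disjoint ⊥ S hdisj
      have hpm : p ≤ m := by
        intro x hx
        by_contra hxm
        exact Set.disjoint_left.mp hpS hx ⟨x, hxm, 0, by ring⟩
      have hfS : f ∈ S := ⟨1, h1m, 1, by ring⟩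
      have hfp : f ∉ p := fun hf => Set.disjoint_left.mp hpS hf hfS
      have hIp : I ≤ p := by
        intro g' hg'
        obtain ⟨k, hk, hgk⟩ := hI g' hg'
        have h1k : (1 - k) ∈ S := ⟨1 - k, fun hmem => h1m (by simpa using m.add_mem hmem (hIm hk)), 0, by ring⟩
        have h1kp : (1 - k) ∉ p := fun hf => Set.disjoint_left.mp hpS hf h1k
        rcases hp.mem_or_mem (show g' * (1 - k) ∈ p by rw [hgk]; exact p.zero_mem) with h | h
        · exact h
        · exact absurd h h1kp
      obtain ⟨g, hg, hann⟩ := h p hp hfp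
      obtain ⟨k, hk, hgk⟩ := hI g hg
      have h1kp : (1 - k) ∈ p := hann (1 - k) (by linear_combination hgk)
      exact hp.ne_top ((Ideal.eq_top_iff_one p).mpr (by simpa using p.add_mem h1kp (hIp hk)))
end

section
/- Let A be a Gelfand ring. Then the purely-maximal ideals of A are exactly the ideals of the form Ker π_m where m is a maximal ideal of A; that is, for every maximal ideal m of A, Ker π_m is a purely-maximal ideal, and every purely-maximal ideal of A equals Ker π_m for some maximal ideal m. -/
variable {A : Type*} [CommRing A]

lemma gelfand_pair (hA : IsGelfandRing A) (a b : A) (hab : a + b = 1) :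
    ∃ r s : A, (1 + a * r) * (1 + b * s) = 0 := by
  by_contra hcon
  push_neg at hcon
  set S : Submonoid A :=
    { carrier := {z | ∃ r s : A, z = (1 + a * r) * (1 + b * s)}
      one_mem' := ⟨0, 0, by ring⟩
      mul_mem' := by
        rintro x y ⟨r₁, s₁, rfl⟩ ⟨r₂, s₂, rfl⟩
        exact ⟨r₁ + r₂ + a * r₁ * r₂, s₁ + s₂ + b * s₁ * s₂, by ring⟩ } with hS
  have hdisj : Disjoint ((⊥ : Ideal A) : Set A) (S : Set A) := by
    rw [Set.disjoint_left]
    rintro x hx ⟨r, s, rfl⟩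
    simp only [SetLike.mem_coe, Ideal.mem_bot] at hx
    exact hcon r s hx
  obtain ⟨p, hp, -, hpS⟩ := Ideal.exists_le_prime_disjoint ⊥ S hdisj
  have key : ∀ c : A, (∃ r s : A, c = (1 + a * r) * (1 + b * s)) → c ∉ p :=
    fun c hc hcp => Set.disjoint_left.mp hpS hcp hc
  have hpa : p ⊔ Ideal.span {a} ≠ ⊤ := by
    intro htop
    obtain ⟨q, hq, z, hz, hqz⟩ := Submodule.mem_sup.mp (htop ▸ Submodule.mem_top : (1:A) ∈ p ⊔ Ideal.span {a})
    obtain ⟨r, rfl⟩ := Ideal.mem_span_singleton.mp hz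
    exact key q ⟨-r, 0, by linear_combination hqz⟩ hq
  have hpb : p ⊔ Ideal.span {b} ≠ ⊤ := by
    intro htop
    obtain ⟨q, hq, z, hz, hqz⟩ := Submodule.mem_sup.mp (htop ▸ Submodule.mem_top : (1:A) ∈ p ⊔ Ideal.span {b})
    obtain ⟨s, rfl⟩ := Ideal.mem_span_singleton.mp hz
    exact key q ⟨0, -s, by linear_combination hqz⟩ hq
  obtain ⟨m₁, hm₁, hle₁⟩ := Ideal.exists_le_maximal _ hpa
  obtain ⟨m₂, hm₂, hle₂⟩ := Ideal.exists_le_maximal _ hpb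
  obtain ⟨m, -, hmu⟩ := hA p hp
  have e₁ := hmu m₁ ⟨hm₁, le_sup_left.trans hle₁⟩
  have e₂ := hmu m₂ ⟨hm₂, le_sup_left.trans hle₂⟩
  have ha : a ∈ m₁ := hle₁ (le_sup_right (α := Ideal A) (Ideal.mem_span_singleton_self a))
  have hb : b ∈ m₂ := hle₂ (le_sup_right (α := Ideal A) (Ideal.mem_span_singleton_self b))
  rw [e₁] at ha; rw [e₂] at hb
  have h1 : (1:A) ∈ m := hab ▸ m.add_mem ha hb
  exact hm₁.ne_top (e₁ ▸ (Ideal.eq_top_iff_one m).mpr h1)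

lemma mem_kerPi_iff (p : Ideal A) (hp : p.IsPrime) (f : A) :
    f ∈ p.kerPi hp ↔ ∃ s ∉ p, s * f = 0 := by
  letI := hp
  rw [Ideal.kerPi, RingHom.mem_ker, IsLocalization.map_eq_zero_iff p.primeCompl]
  constructor
  · rintro ⟨⟨s, hs⟩, h⟩; exact ⟨s, hs, h⟩
  · rintro ⟨s, hs, h⟩; exact ⟨⟨s, hs⟩, h⟩

lemma gelfand_key (hA : IsGelfandRing A) {m : Ideal A} (hm : m.IsMaximal) {s : A} (hs : s ∉ m) :
    ∃ t ∉ m, ∃ x : A, t * (1 - x * s) = 0 := by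
  obtain ⟨r, c, hc, hrc⟩ := hm.exists_inv hs
  obtain ⟨u, v, huv⟩ := gelfand_pair hA c (r * s) (by linear_combination hrc)
  refine ⟨1 + c * u, fun h => hm.ne_top ((Ideal.eq_top_iff_one m).mpr ?_), -(r * v),
    by linear_combination huv⟩
  have h2 := m.sub_mem h (m.mul_mem_right u hc)
  simpa using h2

lemma gelfand_sep (hA : IsGelfandRing A) {m n : Ideal A} (hm : m.IsMaximal) (hn : n.IsMaximal)
    (hne : m ≠ n) : ∃ a ∉ m, ∃ b ∉ n, a * b = 0 := by
  have hco := hm.coprime_of_ne hn hne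
  obtain ⟨x, hx, y, hy, hxy⟩ := Submodule.mem_sup.mp (hco ▸ Submodule.mem_top : (1 : A) ∈ m ⊔ n)
  obtain ⟨r, s, hrs⟩ := gelfand_pair hA x y hxy
  refine ⟨1 + x * r, fun h => hm.ne_top ((Ideal.eq_top_iff_one m).mpr ?_),
    1 + y * s, fun h => hn.ne_top ((Ideal.eq_top_iff_one n).mpr ?_), hrs⟩
  · have h2 := m.sub_mem h (m.mul_mem_right r hx); simpa using h2
  · have h2 := n.sub_mem h (n.mul_mem_right s hy); simpa using h2

lemma kerPi_isPure (hA : IsGelfandRing A) {m : Ideal A} (hm : m.IsMaximal) :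
    (m.kerPi hm.isPrime).IsPure := by
  intro f hf
  obtain ⟨s, hs, hsf⟩ := (mem_kerPi_iff m hm.isPrime f).mp hf
  obtain ⟨t, ht, x, htx⟩ := gelfand_key hA hm hs
  refine ⟨1 - x * s, (mem_kerPi_iff m hm.isPrime _).mpr ⟨t, ht, htx⟩, ?_⟩
  have : f * (1 - (1 - x * s)) = x * (s * f) := by ring
  rw [this, hsf, mul_zero]

lemma pure_le_kerPi {Q n : Ideal A} (hQ : Q.IsPure) (hn : n.IsMaximal) (hle : Q ≤ n) :
    Q ≤ n.kerPi hn.isPrime := by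
  intro f hf
  obtain ⟨g, hg, hfg⟩ := hQ f hf
  refine (mem_kerPi_iff n hn.isPrime f).mpr ⟨1 - g, fun h => ?_, by linear_combination hfg⟩
  have h2 := n.add_mem h (hle hg)
  exact hn.ne_top ((Ideal.eq_top_iff_one n).mpr (by simpa using h2))

lemma kerPi_le (p : Ideal A) (hp : p.IsPrime) : p.kerPi hp ≤ p := by
  intro f hf
  obtain ⟨s, hs, hsf⟩ := (mem_kerPi_iff p hp f).mp hf
  rcases hp.mem_or_mem (hsf ▸ p.zero_mem : s * f ∈ p) with h | h
  · exact absurd h hs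
  · exact h

lemma kerPi_le_max_eq (hA : IsGelfandRing A) {m n : Ideal A} (hm : m.IsMaximal)
    (hn : n.IsMaximal) (hle : m.kerPi hm.isPrime ≤ n) : m = n := by
  by_contra hne
  obtain ⟨a, ha, b, hb, hab⟩ := gelfand_sep hA hm hn hne
  exact hb (hle ((mem_kerPi_iff m hm.isPrime b).mpr ⟨a, ha, hab⟩))

/-- The purely-maximal ideals of a Gelfand ring are precisely the ideals
`Ker π_m` with `m` maximal. -/
theorem purelyMaximal_iff_kerPi_of_gelfand (hA : IsGelfandRing A) :
    (∀ (m : Ideal A) (hm : m.IsMaximal), (m.kerPi hm.isPrime).IsPurelyMaximal) ∧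
    (∀ P : Ideal A, P.IsPurelyMaximal →
      ∃ (m : Ideal A) (hm : m.IsMaximal), P = m.kerPi hm.isPrime) := by
  have hproper : ∀ (m : Ideal A) (hm : m.IsMaximal), m.kerPi hm.isPrime ≠ ⊤ :=
    fun m hm h => hm.ne_top (top_le_iff.mp (h ▸ kerPi_le m hm.isPrime))
  constructor
  · intro m hm
    refine ⟨kerPi_isPure hA hm, hproper m hm, fun Q hQ hQtop hle => ?_⟩
    obtain ⟨n, hn, hQn⟩ := Ideal.exists_le_maximal Q hQtop
    have hmn : m = n := kerPi_le_max_eq hA hm hn (hle.trans hQn)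
    subst hmn
    exact le_antisymm hle (pure_le_kerPi hQ hn hQn)
  · intro P hP
    obtain ⟨hpure, hne, hmax⟩ := hP
    obtain ⟨m, hm, hle⟩ := Ideal.exists_le_maximal P hne
    exact ⟨m, hm, hmax _ (kerPi_isPure hA hm) (hproper m hm) (pure_le_kerPi hpure hm hle)⟩
end

section
/- Let I and J be ideals of a commutative ring A. Then ν(IJ) = ν(I)ν(J), where ν denotes the pure part. -/
variable {A : Type*} [CommRing A]

lemma Ideal.IsPure.mul_pure {K L : Ideal A} (hK : K.IsPure) (hL : L.IsPure) :
    (K * L).IsPure := by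
  intro f hf
  obtain ⟨g, hg, hfg⟩ := hK f (Ideal.mul_le_left hf)
  obtain ⟨h, hh, hfh⟩ := hL f (Ideal.mul_le_right hf)
  exact ⟨g * h, Ideal.mul_mem_mul hg hh, by linear_combination h * hfg + hfh⟩

lemma Ideal.IsPure.le_sq {K : Ideal A} (hK : K.IsPure) : K ≤ K * K := by
  intro f hf
  obtain ⟨g, hg, hfg⟩ := hK f hf
  have : f = f * g := by linear_combination hfg
  rw [this]
  exact Ideal.mul_mem_mul hf hg

lemma Ideal.pure_le_purePart {K I : Ideal A} (hK : K.IsPure) (hKI : K ≤ I) :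
    K ≤ I.purePart := le_sSup ⟨hK, hKI⟩

/-- `ν(IJ) = ν(I)ν(J)` for all ideals `I`, `J`. -/
theorem purePart_mul (I J : Ideal A) :
    (I * J).purePart = I.purePart * J.purePart := by
  apply le_antisymm
  · apply sSup_le
    rintro K ⟨hK, hKIJ⟩
    calc K ≤ K * K := hK.le_sq
    _ ≤ I.purePart * J.purePart :=
      mul_le_mul'
        (Ideal.pure_le_purePart hK (hKIJ.trans Ideal.mul_le_left))
        (Ideal.pure_le_purePart hK (hKIJ.trans Ideal.mul_le_right))
  · rw [Ideal.purePart, Ideal.purePart, sSup_eq_iSup, sSup_eq_iSup,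
      iSup_subtype', iSup_subtype', Submodule.iSup_mul]
    apply iSup_le
    rintro ⟨K, hK, hKI⟩
    rw [Submodule.mul_iSup]
    apply iSup_le
    rintro ⟨L, hL, hLJ⟩
    exact Ideal.pure_le_purePart (hK.mul_pure hL) (mul_le_mul' hKI hLJ)
end

section
/- Let A be a Gelfand ring and I a pure ideal of A. Then I = Σ_{f ∈ I} ν(Af), the sum over all f ∈ I of the pure parts of the principal ideals Af. -/
variable {A : Type*} [CommRing A]

theorem gelfand_comaximal (hA : IsGelfandRing A) (a b : A) (hab : a + b = 1) :
    ∃ r s : A, (1 - a * r) * (1 - b * s) = 0 := by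
  by_contra hcon
  push_neg at hcon
  set S : Submonoid A :=
    { carrier := {x | ∃ r s : A, x = (1 - a * r) * (1 - b * s)}
      one_mem' := ⟨0, 0, by ring⟩
      mul_mem' := by
        rintro x y ⟨r, s, rfl⟩ ⟨r', s', rfl⟩
        exact ⟨r + r' - a * r * r', s + s' - b * s * s', by ring⟩ } with hS
  have hdisj : Disjoint ((⊥ : Ideal A) : Set A) (S : Set A) := by
    rw [Set.disjoint_left]
    rintro x hx ⟨r, s, rfl⟩
    simp only [SetLike.mem_coe, Ideal.mem_bot] at hx
    exact hcon r s hx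
  obtain ⟨p, hp, -, hpd⟩ := Ideal.exists_le_prime_disjoint ⊥ S hdisj
  have key : ∀ c : A, (∀ r : A, 1 - c * r ∈ S) →
      ∃ m : Ideal A, m.IsMaximal ∧ p ≤ m ∧ c ∈ m := by
    intro c hc
    have hne : p ⊔ Ideal.span {c} ≠ ⊤ := by
      intro htop
      rw [Ideal.eq_top_iff_one, Submodule.mem_sup] at htop
      obtain ⟨q, hq, z, hz, hqz⟩ := htop
      rw [Ideal.mem_span_singleton'] at hz
      obtain ⟨r, rfl⟩ := hz
      have : 1 - c * r ∈ p := by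
        have : (1 : A) - r * c = q := by linear_combination -hqz
        rw [mul_comm, this]; exact hq
      exact Set.disjoint_left.mp hpd this (hc r)
    obtain ⟨m, hm, hle⟩ := Ideal.exists_le_maximal _ hne
    exact ⟨m, hm, le_trans le_sup_left hle,
      hle (Ideal.mem_sup_right (Ideal.mem_span_singleton_self c))⟩
  obtain ⟨ma, hma, hpma, hama⟩ := key a (fun r => ⟨r, 0, by ring⟩)
  obtain ⟨mb, hmb, hpmb, hbmb⟩ := key b (fun s => ⟨0, s, by ring⟩)
  obtain ⟨m, -, hm⟩ := hA p hp
  have : ma = mb := (hm ma ⟨hma, hpma⟩).trans (hm mb ⟨hmb, hpmb⟩).symm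
  subst this
  exact hma.ne_top (Ideal.eq_top_iff_one _ |>.mpr (hab ▸ Ideal.add_mem _ hama hbmb))

theorem unitPart_isPure_of_gelfand (hA : IsGelfandRing A) (J : Ideal A) :
    J.unitPart.IsPure := by
  rintro x ⟨y, hy, hxy⟩
  obtain ⟨r, s, hrs⟩ := gelfand_comaximal hA y (1 - y) (by ring)
  refine ⟨1 - (1 - y) * s, ⟨y * r, J.mul_mem_right r hy, by linear_combination hrs⟩, ?_⟩
  have hx1y : x * (1 - y) = 0 := by linear_combination hxy
  calc x * (1 - (1 - (1 - y) * s)) = x * (1 - y) * s := by ring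
  _ = 0 := by rw [hx1y]; ring

theorem unitPart_le (J : Ideal A) : J.unitPart ≤ J := by
  rintro x ⟨y, hy, hxy⟩
  rw [hxy]; exact J.mul_mem_left x hy

theorem unitPart_le_purePart_of_gelfand (hA : IsGelfandRing A) (J : Ideal A) :
    J.unitPart ≤ J.purePart :=
  le_sSup ⟨unitPart_isPure_of_gelfand hA J, unitPart_le J⟩

/-- A pure ideal `I` of a Gelfand ring satisfies `I = Σ_{f ∈ I} ν(Af)`. -/
theorem pure_ideal_eq_iSup_purePart_span_of_gelfand (hA : IsGelfandRing A)
    (I : Ideal A) (hI : I.IsPure) :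
    I = ⨆ f ∈ I, (Ideal.span {f}).purePart := by
  apply le_antisymm
  · intro f hf
    obtain ⟨g, hg, hfg⟩ := hI f hf
    have hfmem : f ∈ (Ideal.span {g}).unitPart :=
      ⟨g, Ideal.mem_span_singleton_self g, by linear_combination hfg⟩
    have : f ∈ (Ideal.span {g}).purePart :=
      unitPart_le_purePart_of_gelfand hA _ hfmem
    exact Ideal.mem_iSup_of_mem g (Ideal.mem_iSup_of_mem hg this)
  · refine iSup₂_le fun f hf => ?_
    refine le_trans (sSup_le fun J hJ => hJ.2) ?_
    rw [Ideal.span_le]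
    simpa using hf
end

section
/- For a commutative ring A, the following statements are equivalent: (i) A is a Gelfand ring; (ii) for every ideal I of A and every maximal ideal m of A, if u(I) ⊆ m then I ⊆ m; (iii) for every pair of distinct maximal ideals m and m' of A, u(m) + u(m') = A; (iv) if I and J are ideals of A with I + J = A, then u(I) + u(J) = A; (v) for every family (I_k) of ideals of A, u(Σ_k I_k) = Σ_k u(I_k); (vi) for every ideal I of A and every maximal ideal m of A, I ⊆ m if and only if u(I) ⊆ m; (vii) for every ideal I of A, Rad(I) = Rad(u(I)). -/
variable {A : Type*} [CommRing A]

section Main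
variable {A : Type*} [CommRing A]

lemma Ideal.mem_unitPart {I : Ideal A} {f : A} : f ∈ I.unitPart ↔ ∃ g ∈ I, f = f * g := Iff.rfl

lemma Ideal.unitPart_le (I : Ideal A) : I.unitPart ≤ I := by
  rintro f ⟨g, hg, hf⟩
  exact hf ▸ I.mul_mem_left f hg

lemma Ideal.unitPart_mono {I J : Ideal A} (h : I ≤ J) : I.unitPart ≤ J.unitPart := by
  rintro f ⟨g, hg, hf⟩
  exact ⟨g, h hg, hf⟩

lemma Ideal.unitPart_top : (⊤ : Ideal A).unitPart = ⊤ :=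
  Ideal.eq_top_iff_one _ |>.mpr ⟨1, trivial, (one_mul 1).symm⟩

lemma gelfand_star (h : IsGelfandRing A) (a b : A) (hab : a + b = 1) :
    ∃ r s : A, (1 + a * r) * (1 + b * s) = 0 := by
  by_contra hc
  push_neg at hc
  set S : Submonoid A :=
    { carrier := {x | ∃ r s, x = (1 + a * r) * (1 + b * s)}
      one_mem' := ⟨0, 0, by ring⟩
      mul_mem' := by
        rintro x y ⟨r, s, rfl⟩ ⟨r', s', rfl⟩
        exact ⟨r + r' + a * r * r', s + s' + b * s * s', by ring⟩ } with hS
  have hdisj : Disjoint ((⊥ : Ideal A) : Set A) (S : Set A) := by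
    rw [Set.disjoint_left]
    rintro x hx ⟨r, s, rfl⟩
    exact hc r s (by simpa using hx)
  obtain ⟨p, hp, -, hpd⟩ := Ideal.exists_le_prime_disjoint ⊥ S hdisj
  have key : ∀ c : A, p ⊔ Ideal.span {c} ≠ ⊤ → ∃ m : Ideal A, m.IsMaximal ∧ p ≤ m ∧ c ∈ m := by
    intro c hne
    obtain ⟨m, hm, hle⟩ := Ideal.exists_le_maximal _ hne
    exact ⟨m, hm, le_trans le_sup_left hle, hle (le_sup_right (α := Ideal A)
      (Ideal.subset_span rfl))⟩
  have ha : p ⊔ Ideal.span {a} ≠ ⊤ := by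
    intro htop
    rw [Ideal.eq_top_iff_one, Submodule.mem_sup] at htop
    obtain ⟨q, hq, z, hz, hqz⟩ := htop
    obtain ⟨r, rfl⟩ := Ideal.mem_span_singleton'.mp hz
    exact Set.disjoint_left.mp hpd hq ⟨-r, 0, by linear_combination hqz⟩
  have hb : p ⊔ Ideal.span {b} ≠ ⊤ := by
    intro htop
    rw [Ideal.eq_top_iff_one, Submodule.mem_sup] at htop
    obtain ⟨q, hq, z, hz, hqz⟩ := htop
    obtain ⟨s, rfl⟩ := Ideal.mem_span_singleton'.mp hz
    exact Set.disjoint_left.mp hpd hq ⟨0, -s, by linear_combination hqz⟩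
  obtain ⟨m, hm, hpm, ham⟩ := key a ha
  obtain ⟨m', hm', hpm', hbm'⟩ := key b hb
  have : m = m' := (h p hp).unique ⟨hm, hpm⟩ ⟨hm', hpm'⟩
  exact hm.ne_top (Ideal.eq_top_iff_one m |>.mpr (hab ▸ m.add_mem ham (this ▸ hbm')))

end Main




universe u

/-- unit part characterization of Gelfand rings. -/
theorem gelfand_tfae_unitPart (A : Type u) [CommRing A] :
    List.TFAE
      [ IsGelfandRing A,
        ∀ I m : Ideal A, m.IsMaximal → I.unitPart ≤ m → I ≤ m,
        ∀ m m' : Ideal A, m.IsMaximal → m'.IsMaximal → m ≠ m' →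
          m.unitPart + m'.unitPart = ⊤,
        ∀ I J : Ideal A, I + J = ⊤ → I.unitPart + J.unitPart = ⊤,
        ∀ (ι : Type u) (I : ι → Ideal A),
          (⨆ k, I k).unitPart = ⨆ k, (I k).unitPart,
        ∀ I m : Ideal A, m.IsMaximal → (I ≤ m ↔ I.unitPart ≤ m),
        ∀ I : Ideal A, I.jacobson = I.unitPart.jacobson ] := by
  tfae_have 1 → 2 := by
    intro h I m hm hum f hf
    by_contra hfm
    obtain ⟨t, c, hc, htc⟩ := hm.exists_inv hfm
    obtain ⟨r, s, hrs⟩ := gelfand_star h (t * f) c (by linear_combination htc)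
    have hx : (1 + c * s) ∈ I.unitPart :=
      ⟨-(t * f * r), I.neg_mem (I.mul_mem_right r (I.mul_mem_left t hf)),
        by linear_combination hrs⟩
    exact hm.ne_top (Ideal.eq_top_iff_one m |>.mpr
      (by have := m.sub_mem (hum hx) (m.mul_mem_right s hc); simpa using this))
  tfae_have 2 → 6 := fun h I m hm =>
    ⟨fun hIm => le_trans I.unitPart_le hIm, h I m hm⟩
  tfae_have 6 → 7 := by
    intro h I
    show sInf _ = sInf _
    congr 1
    ext J
    exact and_congr_left fun hJ => h I J hJ
  tfae_have 7 → 2 := by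
    intro h I m hm hum
    calc I ≤ I.jacobson := Ideal.le_jacobson
    _ = I.unitPart.jacobson := h I
    _ ≤ m := sInf_le ⟨hum, hm⟩
  tfae_have 2 → 5 := by
    intro h ι I
    apply le_antisymm
    · rintro f ⟨g, hg, hf⟩
      set J := ⨆ k, (I k).unitPart with hJ
      have hK : J.colon (Ideal.span {f}) = ⊤ := by
        by_contra hne
        obtain ⟨m, hm, hKm⟩ := Ideal.exists_le_maximal _ hne
        by_cases hall : ∀ k, I k ≤ m
        · have hgm : g ∈ m := iSup_le hall hg
          have h1g : (1 - g) ∈ J.colon (Ideal.span {f}) :=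
            Ideal.mem_colon_span_singleton.mpr (by
              have : (1 - g) * f = 0 := by linear_combination hf
              rw [this]; exact J.zero_mem)
          exact hm.ne_top (Ideal.eq_top_iff_one m |>.mpr
            (by have := m.add_mem (hKm h1g) hgm; simpa using this))
        · push_neg at hall
          obtain ⟨k, hk⟩ := hall
          have : ¬ (I k).unitPart ≤ m := fun hc => hk (h (I k) m hm hc)
          obtain ⟨x, hx, hxm⟩ := Set.not_subset.mp this
          have hxJ : x ∈ J := (le_iSup (fun k => (I k).unitPart) k) hx
          exact hxm (hKm (Ideal.mem_colon_span_singleton.mpr (J.mul_mem_right f hxJ)))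
      have : (1 : A) ∈ J.colon (Ideal.span {f}) := hK ▸ trivial
      simpa using Ideal.mem_colon_span_singleton.mp this
    · exact iSup_le fun k => Ideal.unitPart_mono (le_iSup I k)
  tfae_have 5 → 4 := by
    intro h I J hIJ
    set F : ULift.{u} Bool → Ideal A := fun b => if b.down then I else J with hF
    have hsup : (⨆ k, F k) = I ⊔ J := by
      apply le_antisymm
      · exact iSup_le fun k => by
          rcases k with ⟨_ | _⟩
          · exact le_sup_right
          · exact le_sup_left
      · exact sup_le (le_iSup F ⟨true⟩) (le_iSup F ⟨false⟩)
    have hsup' : (⨆ k, (F k).unitPart) ≤ I.unitPart ⊔ J.unitPart := by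
      exact iSup_le fun k => by
        rcases k with ⟨_ | _⟩
        · exact le_sup_right
        · exact le_sup_left
    have htop : (⨆ k, F k) = ⊤ := by rw [hsup, ← Submodule.add_eq_sup, hIJ]
    rw [Submodule.add_eq_sup]
    have := h (ULift.{u} Bool) F
    rw [htop, Ideal.unitPart_top] at this
    exact top_le_iff.mp (this ▸ hsup')
  tfae_have 4 → 3 := by
    intro h m m' hm hm' hne
    refine h m m' ?_
    rw [Submodule.add_eq_sup]
    by_contra hc
    obtain ⟨n, hn, hmn⟩ := Ideal.exists_le_maximal _ hc
    exact hne ((hm.eq_of_le hn.ne_top (le_trans le_sup_left hmn)).trans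
      (hm'.eq_of_le hn.ne_top (le_trans le_sup_right hmn)).symm)
  tfae_have 3 → 1 := by
    intro h p hp
    obtain ⟨m, hm, hpm⟩ := Ideal.exists_le_maximal p hp.ne_top
    refine ⟨m, ⟨hm, hpm⟩, ?_⟩
    rintro m' ⟨hm', hpm'⟩
    by_contra hne
    have key : ∀ n : Ideal A, n.IsMaximal → p ≤ n → n.unitPart ≤ p := by
      rintro n hn hpn f ⟨g, hg, hf⟩
      have h0 : f * (1 - g) = 0 := by linear_combination hf
      rcases hp.mem_or_mem (h0 ▸ p.zero_mem) with hfp | h1g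
      · exact hfp
      · exact absurd (Ideal.eq_top_iff_one n |>.mpr
          (by have := n.add_mem (hpn h1g) hg; simpa using this)) hn.ne_top
    have := h m' m hm' hm hne
    rw [Submodule.add_eq_sup] at this
    exact hp.ne_top (top_le_iff.mp
      (this ▸ sup_le (key m' hm' hpm') (key m hm hpm)))
  tfae_finish
end

section
/- Let I be an ideal of a commutative ring A. Then u(I) = ⋂ u(m), the intersection being taken over all maximal ideals m of A containing I. -/
variable {A : Type*} [CommRing A]

/-- `u(I)` is the intersection of the `u(m)` over all maximal ideals
`m` containing `I`. -/
theorem unitPart_eq_iInf_unitPart_maximal (I : Ideal A) :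
    I.unitPart = ⨅ (m : Ideal A) (_ : m.IsMaximal ∧ I ≤ m), m.unitPart := by
  ext f
  simp only [Submodule.mem_iInf]
  constructor
  · rintro ⟨g, hg, hfg⟩ m ⟨hm, hIm⟩
    exact ⟨g, hIm hg, hfg⟩
  · intro h
    have hJ : I ⊔ Ideal.torsionOf A A f = ⊤ := by
      by_contra hne
      obtain ⟨m, hm, hle⟩ := Ideal.exists_le_maximal _ hne
      obtain ⟨g, hg, hfg⟩ := h m ⟨hm, le_trans le_sup_left hle⟩
      have h1 : (1 - g) ∈ Ideal.torsionOf A A f := by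
        rw [Ideal.mem_torsionOf_iff, smul_eq_mul]
        linear_combination hfg
      have : (1 : A) ∈ m := by
        have := m.add_mem (hle (le_sup_right (α := Ideal A) h1)) hg
        simpa using this
      exact hm.ne_top (m.eq_top_iff_one.mpr this)
    have h1 : (1 : A) ∈ I ⊔ Ideal.torsionOf A A f := hJ ▸ Submodule.mem_top
    obtain ⟨a, ha, b, hb, hab⟩ := Submodule.mem_sup.mp h1
    rw [Ideal.mem_torsionOf_iff, smul_eq_mul] at hb
    exact ⟨a, ha, by linear_combination -f * hab + hb⟩
end

section
/- Let I and J be pure ideals of a commutative ring A such that √I = √J. Then I = J. -/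
variable {A : Type*} [CommRing A]

lemma pure_le_of_radical_le {I J : Ideal A} (hI : I.IsPure)
    (h : I.radical ≤ J.radical) : I ≤ J := by
  intro f hf
  obtain ⟨g, hg, hfg⟩ := hI f hf
  obtain ⟨n, hgn⟩ := h (Ideal.le_radical hg)
  have key : ∀ m : ℕ, f * g ^ m = f := by
    intro m
    induction m with
    | zero => simp
    | succ m ih => rw [pow_succ, ← mul_assoc]; linear_combination g * ih - hfg
  rw [← key n]
  exact J.mul_mem_left f hgn

/-- Pure ideals with the same radical are equal. -/
theorem pure_ideal_eq_of_radical_eq (I J : Ideal A)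
    (hI : I.IsPure) (hJ : J.IsPure) (h : I.radical = J.radical) : I = J := by
  exact le_antisymm (pure_le_of_radical_le hI h.le) (pure_le_of_radical_le hJ h.ge)
end

section
/- Let A be a commutative ring. Then A is an mp-ring if and only if p = √(ν(p)) for every minimal prime ideal p of A. -/
variable {A : Type*} [CommRing A]

/-- The annihilator of an element, as an ideal. -/
def annIdeal (f : A) : Ideal A where
  carrier := {y | f * y = 0}
  zero_mem' := by simp
  add_mem' := by
    intro a b ha hb
    simp only [Set.mem_setOf_eq] at *
    rw [mul_add, ha, hb, add_zero]
  smul_mem' := by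
    intro c a ha
    simp only [Set.mem_setOf_eq, smul_eq_mul] at *
    rw [mul_comm c a, ← mul_assoc, ha, zero_mul]

lemma mem_unitPart_iff {p : Ideal A} {x : A} :
    x ∈ p.unitPart ↔ ∃ g ∈ p, x = x * g := Iff.rfl

lemma unitPart_le_s14 (p : Ideal A) : p.unitPart ≤ p := by
  rintro x ⟨g, hg, hx⟩
  rw [hx]
  exact p.mul_mem_left x hg

/-- Key lemma: in an mp-ring, any prime containing `u(p)` (for `p` a minimal prime)
contains `p`. -/
lemma key_lemma (hA : IsMpRing A) {p : Ideal A} (hp : p ∈ minimalPrimes A)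
    {q : Ideal A} (hq : q.IsPrime) (hle : p.unitPart ≤ q) : p ≤ q := by
  by_contra hcon
  -- a minimal prime below q
  obtain ⟨q₀, hq₀, hq₀le⟩ := Ideal.exists_minimalPrimes_le (bot_le : (⊥ : Ideal A) ≤ q)
  have hq₀mem : q₀ ∈ minimalPrimes A := hq₀
  have hpq₀ : p ≠ q₀ := by
    rintro rfl
    exact hcon hq₀le
  -- p and q₀ are comaximal
  have hsup : p ⊔ q₀ = ⊤ := by
    by_contra hne
    obtain ⟨m, hm, hlem⟩ := Ideal.exists_le_maximal _ hne
    obtain ⟨y, _, huniq⟩ := hA m hm.isPrime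
    have h1 : p = y := huniq p ⟨hp, le_trans le_sup_left hlem⟩
    have h2 : q₀ = y := huniq q₀ ⟨hq₀mem, le_trans le_sup_right hlem⟩
    exact hpq₀ (h1.trans h2.symm)
  obtain ⟨u, hu, v, hv, huv⟩ := Submodule.mem_sup.mp (hsup ▸ Submodule.mem_top : (1 : A) ∈ p ⊔ q₀)
  -- the multiplicative set generated by the complement of q and v
  set S : Submonoid A := q.primeCompl ⊔ Submonoid.powers v with hS
  by_cases h0 : (0 : A) ∈ S
  · -- 0 = w * v ^ k with w ∉ q; then w ∈ u(p) ≤ q, contradiction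
    obtain ⟨w, hw, z, hz, hwz⟩ := Submonoid.mem_sup.mp h0
    obtain ⟨k, rfl⟩ := hz
    have hwu : w ∈ p.unitPart := by
      refine ⟨1 - v ^ k, ?_, ?_⟩
      · -- 1 - v ^ k ∈ p since v = 1 - u with u ∈ p
        have hgeom : 1 - v ^ k = (∑ i ∈ Finset.range k, v ^ i) * u := by
          have := geom_sum_mul v k
          have huv' : v - 1 = -u := by linear_combination huv
          rw [huv'] at this
          linear_combination this
        rw [hgeom]
        exact p.mul_mem_left _ hu
      · have : w * v ^ k = 0 := hwz
        linear_combination this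
    exact hw (hle hwu)
  · -- get a prime disjoint from S
    have hdisj : Disjoint ((⊥ : Ideal A) : Set A) (S : Set A) := by
      rw [Set.disjoint_left]
      intro x hx
      simp only [Submodule.bot_coe, Set.mem_singleton_iff] at hx
      subst hx
      exact h0
    obtain ⟨q', hq', _, hq'disj⟩ := Ideal.exists_le_prime_disjoint _ S hdisj
    have hq'q : q' ≤ q := by
      intro x hx
      by_contra hxq
      exact Set.disjoint_left.mp hq'disj hx (Submonoid.mem_sup_left hxq)
    have hvq' : v ∉ q' :=
      fun hvq' => Set.disjoint_left.mp hq'disj hvq' (Submonoid.mem_sup_right ⟨1, pow_one v⟩)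
    -- a minimal prime below q' is a minimal prime below q, hence equals q₀
    haveI := hq'
    obtain ⟨q₁, hq₁, hq₁le⟩ := Ideal.exists_minimalPrimes_le (bot_le : (⊥ : Ideal A) ≤ q')
    obtain ⟨y, _, huniq⟩ := hA q hq
    have e1 : q₁ = y := huniq q₁ ⟨hq₁, hq₁le.trans hq'q⟩
    have e2 : q₀ = y := huniq q₀ ⟨hq₀mem, hq₀le⟩
    have : v ∈ q₁ := (e1.trans e2.symm) ▸ hv
    exact hvq' (hq₁le this)

/-- In an mp-ring, the unit part of a minimal prime is a pure ideal. -/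
lemma unitPart_isPure (hA : IsMpRing A) {p : Ideal A} (hp : p ∈ minimalPrimes A) :
    p.unitPart.IsPure := by
  intro f hf
  obtain ⟨g, hg, hfg⟩ := hf
  have hT : p.unitPart ⊔ annIdeal f = ⊤ := by
    by_contra hne
    obtain ⟨m, hm, hlem⟩ := Ideal.exists_le_maximal _ hne
    have hpm : p ≤ m := key_lemma hA hp hm.isPrime (le_trans le_sup_left hlem)
    have h1g : (1 - g) ∈ annIdeal f := by
      show f * (1 - g) = 0
      linear_combination hfg
    have : (1 : A) ∈ m := by
      have hgm : g ∈ m := hpm hg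
      have h1gm : (1 - g) ∈ m := hlem (le_sup_right (α := Ideal A) h1g)
      simpa using m.add_mem h1gm hgm
    exact hm.ne_top ((Ideal.eq_top_iff_one m).mpr this)
  obtain ⟨a, ha, b, hb, hab⟩ := Submodule.mem_sup.mp (hT ▸ Submodule.mem_top : (1 : A) ∈ _)
  refine ⟨a, ha, ?_⟩
  have hb' : f * b = 0 := hb
  have : (1 : A) - a = b := by linear_combination -hab
  rw [this, hb']

/-- `A` is an mp-ring iff `p = √(ν(p))` for every minimal prime `p`. -/
theorem isMpRing_iff_minimalPrimes_eq_radical_purePart :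
    IsMpRing A ↔ ∀ p ∈ minimalPrimes A, p = p.purePart.radical := by
  constructor
  · intro hA p hp
    have hprime : p.IsPrime := hp.1.1
    apply le_antisymm
    · have h1 : p ≤ p.unitPart.radical := by
        rw [Ideal.radical_eq_sInf]
        exact le_sInf fun q hq => key_lemma hA hp hq.2 hq.1
      refine h1.trans (Ideal.radical_mono ?_)
      exact le_sSup ⟨unitPart_isPure hA hp, unitPart_le_s14 p⟩
    · calc p.purePart.radical ≤ p.radical :=
            Ideal.radical_mono (sSup_le fun J hJ => hJ.2)
        _ = p := hprime.radical
  · intro h q hq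
    obtain ⟨q₀, hq₀, hq₀le⟩ := Ideal.exists_minimalPrimes_le (bot_le : (⊥ : Ideal A) ≤ q)
    haveI hq₀prime : q₀.IsPrime := hq₀.1.1
    refine ⟨q₀, ⟨hq₀, hq₀le⟩, ?_⟩
    rintro r ⟨hr, hrle⟩
    have hrprime : r.IsPrime := hr.1.1
    have hsub : r.purePart ≤ q₀ := by
      apply sSup_le
      rintro J ⟨hJpure, hJle⟩ f hfJ
      obtain ⟨g, hgJ, hfg⟩ := hJpure f hfJ
      have hgq : g ∈ q := hrle (hJle hgJ)
      have hmem : f * (1 - g) ∈ q₀ := by rw [hfg]; exact q₀.zero_mem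
      rcases hq₀prime.mem_or_mem hmem with hf | h1g
      · exact hf
      · exfalso
        have : (1 : A) ∈ q := by simpa using q.add_mem (hq₀le h1g) hgq
        exact hq.ne_top ((Ideal.eq_top_iff_one q).mpr this)
    have h1 : r ≤ q₀ := by
      rw [h r hr]
      exact (Ideal.radical_mono hsub).trans (le_of_eq hq₀prime.radical)
    exact le_antisymm h1 (hq₀.2 ⟨hrprime, bot_le⟩ h1)
end

section
/- Let A be a reduced mp-ring. Then every purely-prime ideal of A is purely-maximal. -/
variable {A : Type*} [CommRing A]

/-- The annihilator of an element, as an ideal. -/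
def annE (a : A) : Ideal A where
  carrier := {x | x * a = 0}
  zero_mem' := by simp
  add_mem' := by
    intro x y hx hy
    simp only [Set.mem_setOf_eq] at *
    rw [add_mul, hx, hy, add_zero]
  smul_mem' := by
    intro c x hx
    simp only [Set.mem_setOf_eq, smul_eq_mul] at *
    rw [mul_assoc, hx, mul_zero]

lemma mem_annE {a x : A} : x ∈ annE a ↔ x * a = 0 := Iff.rfl

lemma helper_min [IsReduced A] (hA : IsMpRing A) {m : Ideal A} (hm : m.IsPrime)
    {q : Ideal A} (hq : q ∈ minimalPrimes A) (hqm : q ≤ m) {a : A} (ha : a ∈ q)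
    (hann : annE a ≤ m) : False := by
  -- multiplicative set S = {s * a^n | s ∉ m}
  set S : Submonoid A :=
    { carrier := {x | ∃ s ∉ m, ∃ n : ℕ, x = s * a ^ n}
      one_mem' := ⟨1, hm.1 ∘ (Ideal.eq_top_iff_one m).mpr, 0, by ring⟩
      mul_mem' := by
        rintro x y ⟨s, hs, n, rfl⟩ ⟨t, ht, k, rfl⟩
        exact ⟨s * t, fun h => ((hm.mem_or_mem h).elim hs ht), n + k, by ring⟩ } with hS
  have hdisj : Disjoint ((⊥ : Ideal A) : Set A) (S : Set A) := by
    rw [Set.disjoint_left]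
    rintro x hx ⟨s, hs, n, hsa⟩
    simp only [SetLike.mem_coe, Ideal.mem_bot] at hx
    subst hx
    rcases n with _ | n
    · apply hs
      have hs0 : s = 0 := by simpa using hsa.symm
      rw [hs0]; exact m.zero_mem
    · -- s * a^(n+1) = 0 → (s*a)^(n+1) = 0 → s*a = 0 → s ∈ m
      have h1 : (s * a) ^ (n + 1) = 0 := by
        have : s ^ (n+1) * a ^ (n+1) = s ^ n * (s * a ^ (n+1)) := by ring
        rw [mul_pow, this, ← hsa, mul_zero]
      have h2 : s * a = 0 := IsReduced.eq_zero _ ⟨n+1, h1⟩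
      exact hs (hann h2)
  obtain ⟨p, hp, -, hpd⟩ := Ideal.exists_le_prime_disjoint (⊥ : Ideal A) S hdisj
  have hpm : p ≤ m := by
    intro x hx
    by_contra hxm
    exact Set.disjoint_left.mp hpd hx ⟨x, hxm, 0, by ring⟩
  have hap : a ∉ p := fun h => Set.disjoint_left.mp hpd h ⟨1, hm.1 ∘ (Ideal.eq_top_iff_one m).mpr, 1, by ring⟩
  -- minimal prime under p
  obtain ⟨q', hq', hq'p⟩ := Ideal.exists_minimalPrimes_le (bot_le : (⊥ : Ideal A) ≤ p)
  obtain ⟨q₀, -, huniq⟩ := hA m hm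
  have e1 : q = q₀ := huniq q ⟨hq, hqm⟩
  have e2 : q' = q₀ := huniq q' ⟨hq', hq'p.trans hpm⟩
  exact hap (hq'p (e2 ▸ e1 ▸ ha : a ∈ q'))

lemma ann_add_ann [IsReduced A] (hA : IsMpRing A) {a b : A} (hab : a * b = 0) :
    annE a ⊔ annE b = ⊤ := by
  by_contra h
  obtain ⟨m, hm, hle⟩ := Ideal.exists_le_maximal _ h
  have hmp : m.IsPrime := hm.isPrime
  obtain ⟨q, hq, hqm⟩ := Ideal.exists_minimalPrimes_le (bot_le : (⊥ : Ideal A) ≤ m)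
  have hqprime : q.IsPrime := hq.1.1
  have : a ∈ q ∨ b ∈ q := hqprime.mem_or_mem (show a * b ∈ q by rw [hab]; exact q.zero_mem)
  rcases this with ha | hb
  · exact helper_min hA hmp hq hqm ha ((le_sup_left : annE a ≤ _).trans hle)
  · exact helper_min hA hmp hq hqm hb ((le_sup_right : annE b ≤ _).trans hle)

lemma annE_isPure [IsReduced A] (hA : IsMpRing A) (a : A) : (annE a).IsPure := by
  intro f hf
  have := ann_add_ann hA (show f * a = 0 from hf)
  have h1 : (1 : A) ∈ annE f ⊔ annE a := by rw [this]; trivial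
  obtain ⟨x, hx, y, hy, hxy⟩ := Submodule.mem_sup.mp h1
  refine ⟨y, hy, ?_⟩
  have hx' : x * f = 0 := hx
  have : 1 - y = x := by linear_combination -hxy
  rw [this, mul_comm f x, hx']


/-- In a reduced mp-ring, every purely-prime ideal is purely-maximal. -/
theorem purelyPrime_isPurelyMaximal_of_reduced_mp [IsReduced A] (hA : IsMpRing A)
    (P : Ideal A) (hP : P.IsPurelyPrime) : P.IsPurelyMaximal := by
  obtain ⟨hpure, hne, hprime⟩ := hP
  refine ⟨hpure, hne, fun Q hQpure hQne hPQ => le_antisymm hPQ ?_⟩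
  intro f hf
  obtain ⟨g, hg, hfg⟩ := hQpure f hf
  -- annE (1-g) * annE g = 0 ≤ P
  have hprod : annE (1 - g) * annE g ≤ P := by
    rw [Ideal.mul_le]
    intro u hu v hv
    have h1 : u * (1 - g) = 0 := hu
    have h2 : v * g = 0 := hv
    have : u * v = 0 := by linear_combination v * h1 + u * h2
    rw [this]; exact P.zero_mem
  rcases hprime _ _ (annE_isPure hA _) (annE_isPure hA _) hprod with h | h
  · exact h (show f * (1 - g) = 0 from hfg)
  · -- annE g ≤ P: since Q pure, g = g*h, 1-h ∈ annE g ≤ P ≤ Q, and h ∈ Q ⇒ 1 ∈ Q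
    obtain ⟨h', hh', hgh⟩ := hQpure g hg
    have : (1 - h') ∈ annE g := by
      show (1 - h') * g = 0
      linear_combination hgh
    have h1Q : (1 : A) ∈ Q := by
      have := hPQ (h this)
      simpa using Q.add_mem this hh'
    exact absurd ((Ideal.eq_top_iff_one Q).mpr h1Q) hQne
end

section
/- Let A be a commutative ring. Then A is a reduced mp-ring if and only if the set of minimal prime ideals of A coincides with the set of purely-prime ideals of A (i.e., an ideal of A is a minimal prime if and only if it is purely-prime). -/
variable {A : Type*} [CommRing A]

/-- annihilator of an element -/
def annI (x : A) : Ideal A where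
  carrier := {a | a * x = 0}
  zero_mem' := by simp
  add_mem' := by
    intro a b ha hb
    simp only [Set.mem_setOf_eq] at *
    rw [add_mul, ha, hb, add_zero]
  smul_mem' := by
    intro c a ha
    simp only [Set.mem_setOf_eq, smul_eq_mul] at *
    rw [mul_assoc, ha, mul_zero]

lemma mem_annI {x a : A} : a ∈ annI x ↔ a * x = 0 := Iff.rfl

lemma exists_min_le {m : Ideal A} (hm : m.IsPrime) :
    ∃ q ∈ minimalPrimes A, q ≤ m := by
  haveI := hm
  exact Ideal.exists_minimalPrimes_le (bot_le : (⊥ : Ideal A) ≤ m)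

lemma min_isPrime {q : Ideal A} (hq : q ∈ minimalPrimes A) : q.IsPrime := hq.1.1

/-- key localization-style lemma -/
lemma Lstar (hR : IsReduced A) (hmp : IsMpRing A) {p m : Ideal A}
    (hp : p ∈ minimalPrimes A) (hm : m.IsPrime) (hpm : p ≤ m) {a : A} (ha : a ∈ p) :
    ∃ s ∉ m, s * a = 0 := by
  by_contra hcon
  push_neg at hcon
  have h1m : (1 : A) ∉ m := (Ideal.ne_top_iff_one m).mp hm.ne_top
  set S : Submonoid A :=
    { carrier := {x | ∃ s ∉ m, ∃ n : ℕ, s * a ^ n = x}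
      one_mem' := ⟨1, h1m, 0, by simp⟩
      mul_mem' := by
        rintro x y ⟨s, hs, n, rfl⟩ ⟨t, ht, k, rfl⟩
        exact ⟨s * t, fun h => ((hm.mem_or_mem h).elim hs ht), n + k, by ring⟩ } with hS
  have hdisj : Disjoint ((⊥ : Ideal A) : Set A) (S : Set A) := by
    rw [Set.disjoint_left]
    rintro x hx ⟨s, hs, n, hsn⟩
    have hx0 : x = 0 := by simpa using hx
    subst hx0
    cases n with
    | zero => simp at hsn; exact hs (hsn ▸ m.zero_mem)
    | succ k =>
        have hnil : (s * a) ^ (k + 1) = 0 := by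
          rw [mul_pow]
          calc s ^ (k+1) * a ^ (k+1) = s ^ k * (s * a ^ (k+1)) := by ring
          _ = 0 := by rw [hsn, mul_zero]
        exact hcon s hs (hR.eq_zero _ ⟨k + 1, hnil⟩)
  obtain ⟨r, hr, -, hrdisj⟩ := Ideal.exists_le_prime_disjoint (⊥ : Ideal A) S hdisj
  have haS : a ∈ (S : Set A) := ⟨1, h1m, 1, by simp⟩
  have har : a ∉ r := fun h => Set.disjoint_left.mp hrdisj h haS
  have hrm : r ≤ m := by
    intro x hx
    by_contra hxm
    exact Set.disjoint_left.mp hrdisj hx ⟨x, hxm, 0, by simp⟩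
  haveI := hr
  obtain ⟨q, hq, hqr⟩ := Ideal.exists_minimalPrimes_le (bot_le : (⊥ : Ideal A) ≤ r)
  obtain ⟨q₀, -, huni⟩ := hmp m hm
  have h1 : p = q₀ := huni p ⟨hp, hpm⟩
  have h2 : q = q₀ := huni q ⟨hq, hqr.trans hrm⟩
  exact har (hqr (by rw [h2, ← h1]; exact ha))

/-- a pure ideal below a proper ideal m is below any prime below m -/
lemma Ideal.IsPure.le_of_le {P q m : Ideal A} (hP : P.IsPure) (hq : q.IsPrime)
    (hqm : q ≤ m) (hPm : P ≤ m) (hm : m ≠ ⊤) : P ≤ q := by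
  intro f hf
  obtain ⟨g, hg, hfg⟩ := hP f hf
  rcases hq.mem_or_mem (show f * (1 - g) ∈ q from hfg ▸ q.zero_mem) with h | h
  · exact h
  · exfalso
    have h1 : (1 : A) ∈ m := by
      have := m.add_mem (hqm h) (hPm hg)
      simpa using this
    exact hm ((Ideal.eq_top_iff_one m).mpr h1)

lemma min_pure (hR : IsReduced A) (hmp : IsMpRing A) {p : Ideal A}
    (hp : p ∈ minimalPrimes A) : p.IsPure := by
  intro f hf
  by_cases htop : annI f ⊔ p = ⊤
  · obtain ⟨u, hu, g, hg, hug⟩ := Submodule.mem_sup.mp ((Ideal.eq_top_iff_one _).mp htop)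
    refine ⟨g, hg, ?_⟩
    have hu' : u * f = 0 := hu
    have : u = 1 - g := by linear_combination hug
    rw [← this, mul_comm, hu']
  · exfalso
    obtain ⟨m, hm, hle⟩ := Ideal.exists_le_maximal _ htop
    obtain ⟨s, hs, hsf⟩ := Lstar hR hmp hp hm.isPrime ((le_sup_right.trans hle)) hf
    exact hs (hle (Ideal.mem_sup_left (show s ∈ annI f from hsf)))

lemma annI_pure (hR : IsReduced A) (hmp : IsMpRing A) (x : A) : (annI x).IsPure := by
  intro a ha
  by_cases htop : annI a ⊔ annI x = ⊤
  · obtain ⟨u, hu, g, hg, hug⟩ := Submodule.mem_sup.mp ((Ideal.eq_top_iff_one _).mp htop)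
    refine ⟨g, hg, ?_⟩
    have hu' : u * a = 0 := hu
    have : u = 1 - g := by linear_combination hug
    rw [← this, mul_comm, hu']
  · exfalso
    obtain ⟨m, hm, hle⟩ := Ideal.exists_le_maximal _ htop
    obtain ⟨q, hq, hqm⟩ := exists_min_le hm.isPrime
    have hax : a * x ∈ q := (show a * x = 0 from ha) ▸ q.zero_mem
    rcases (min_isPrime hq).mem_or_mem hax with h | h
    · obtain ⟨s, hs, hsa⟩ := Lstar hR hmp hq hm.isPrime hqm h
      exact hs (hle (Ideal.mem_sup_left (show s ∈ annI a from hsa)))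
    · obtain ⟨s, hs, hsx⟩ := Lstar hR hmp hq hm.isPrime hqm h
      exact hs (hle (Ideal.mem_sup_right (show s ∈ annI x from hsx)))

lemma pure_eq_sInf (hR : IsReduced A) {P : Ideal A} (hP : P.IsPure) (hPtop : P ≠ ⊤) :
    P = sInf {q | q ∈ minimalPrimes A ∧ P ≤ q} := by
  refine le_antisymm (le_sInf fun q hq => hq.2) ?_
  have hrad : sInf {q | q ∈ minimalPrimes A ∧ P ≤ q} ≤ P.radical := by
    rw [Ideal.radical_eq_sInf]
    refine le_sInf ?_
    rintro r ⟨hPr, hr⟩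
    haveI := hr
    obtain ⟨q, hq, hqr⟩ := Ideal.exists_minimalPrimes_le (bot_le : (⊥ : Ideal A) ≤ r)
    have hPq : P ≤ q := hP.le_of_le (min_isPrime hq) hqr hPr hr.ne_top
    exact (sInf_le (show q ∈ {q | q ∈ minimalPrimes A ∧ P ≤ q} from ⟨hq, hPq⟩)).trans hqr
  refine hrad.trans ?_
  intro z hz
  obtain ⟨n, hzn⟩ := Ideal.mem_radical_iff.mp hz
  obtain ⟨g, hg, hfg⟩ := hP _ hzn
  rcases Nat.eq_zero_or_pos n with rfl | hn
  · simp at hzn; exact absurd ((Ideal.eq_top_iff_one _).mpr hzn) hPtop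
  · have hnil : (z * (1 - g)) ^ n = 0 := by
      rw [mul_pow]
      obtain ⟨k, rfl⟩ := Nat.exists_eq_succ_of_ne_zero hn.ne'
      calc z ^ (k+1) * (1-g) ^ (k+1) = (z ^ (k+1) * (1 - g)) * (1-g) ^ k := by ring
      _ = 0 := by rw [hfg, zero_mul]
    have hz0 : z * (1 - g) = 0 := hR.eq_zero _ ⟨n, hnil⟩
    have : z = z * g := by linear_combination hz0
    rw [this]
    exact P.mul_mem_left z hg

lemma min_comax (hmp : IsMpRing A) {p q : Ideal A} (hp : p ∈ minimalPrimes A)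
    (hq : q ∈ minimalPrimes A) (hne : p ≠ q) : p ⊔ q = ⊤ := by
  by_contra htop
  obtain ⟨m, hm, hle⟩ := Ideal.exists_le_maximal _ htop
  obtain ⟨q₀, -, huni⟩ := hmp m hm.isPrime
  exact hne ((huni p ⟨hp, le_sup_left.trans hle⟩).trans (huni q ⟨hq, le_sup_right.trans hle⟩).symm)


/-- `A` is a reduced mp-ring iff the minimal primes of `A` are exactly
the purely-prime ideals of `A`. -/
theorem isReduced_and_isMpRing_iff_minimalPrimes_eq_purelyPrime :
    (IsReduced A ∧ IsMpRing A) ↔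
      ∀ I : Ideal A, I ∈ minimalPrimes A ↔ I.IsPurelyPrime := by
  constructor
  · rintro ⟨hR, hmp⟩ I
    constructor
    · intro hI
      exact ⟨min_pure hR hmp hI, (min_isPrime hI).ne_top,
        fun I' J _ _ hmul => (min_isPrime hI).mul_le.mp hmul⟩
    · rintro ⟨hPpure, hPtop, hPP⟩
      obtain ⟨m, hm, hPm⟩ := Ideal.exists_le_maximal I hPtop
      obtain ⟨p, hp, hpm⟩ := exists_min_le hm.isPrime
      have hPp : I ≤ p := hPpure.le_of_le (min_isPrime hp) hpm hPm hm.ne_top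
      have key := pure_eq_sInf hR hPpure hPtop
      have hsingle : ∀ q, q ∈ minimalPrimes A → I ≤ q → q = p := by
        intro q hq hPq
        by_contra hne
        have hsup : q ⊔ p = ⊤ := min_comax hmp hq hp hne
        obtain ⟨v, hv, u, hu, hvu⟩ := Submodule.mem_sup.mp
          (show (1:A) ∈ q ⊔ p by rw [hsup]; exact Submodule.mem_top)
        have hIJ : annI u * annI v ≤ I := by
          rw [key]
          refine le_sInf ?_
          rintro r ⟨hr, hPr⟩
          by_cases hur : u ∈ r
          · have hvr : v ∉ r := fun hvr => (min_isPrime hr).ne_top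
              ((Ideal.eq_top_iff_one r).mpr (by rw [← hvu]; exact r.add_mem hvr hur))
            refine le_trans Ideal.mul_le_right ?_
            intro b hb
            exact ((min_isPrime hr).mem_or_mem
              (show b * v ∈ r from (show b * v = 0 from hb) ▸ r.zero_mem)).resolve_right hvr
          · refine le_trans Ideal.mul_le_left ?_
            intro b hb
            exact ((min_isPrime hr).mem_or_mem
              (show b * u ∈ r from (show b * u = 0 from hb) ▸ r.zero_mem)).resolve_right hur
        rcases hPP (annI u) (annI v) (annI_pure hR hmp u) (annI_pure hR hmp v) hIJ with hann | hann
        · obtain ⟨s, hs, hsu⟩ := Lstar hR hmp hp (min_isPrime hp) le_rfl hu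
          exact hs (hPp (hann (show s ∈ annI u from hsu)))
        · obtain ⟨s, hs, hsv⟩ := Lstar hR hmp hq (min_isPrime hq) le_rfl hv
          exact hs (hPq (hann (show s ∈ annI v from hsv)))
      have hset : {q | q ∈ minimalPrimes A ∧ I ≤ q} = {p} := by
        ext q
        simp only [Set.mem_setOf_eq, Set.mem_singleton_iff]
        exact ⟨fun ⟨h1, h2⟩ => hsingle q h1 h2, fun hqe => hqe ▸ ⟨hp, hPp⟩⟩
      rw [key, hset, sInf_singleton]
      exact hp
  · intro h
    constructor
    · refine ⟨fun x hx => ?_⟩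
      by_contra hx0
      have htop : annI x ≠ ⊤ := fun ht => hx0 (by
        have h1 : (1:A) ∈ annI x := ht ▸ Submodule.mem_top
        simpa [mem_annI] using h1)
      obtain ⟨m, hm, hle⟩ := Ideal.exists_le_maximal _ htop
      obtain ⟨q, hq, hqm⟩ := exists_min_le hm.isPrime
      obtain ⟨n, hn⟩ := hx
      have hxq : x ∈ q := (min_isPrime hq).mem_of_pow_mem n
        (show x ^ n ∈ q from hn ▸ q.zero_mem)
      obtain ⟨g, hg, hfg⟩ := ((h q).mp hq).1 x hxq
      have h1g : (1 - g) ∈ annI x := show (1 - g) * x = 0 by rw [mul_comm]; exact hfg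
      have h1m : (1:A) ∈ m := by
        have := m.add_mem (hle h1g) (hqm hg)
        simpa using this
      exact hm.ne_top ((Ideal.eq_top_iff_one m).mpr h1m)
    · intro r hr
      obtain ⟨q, hq, hqr⟩ := exists_min_le hr
      refine ⟨q, ⟨hq, hqr⟩, ?_⟩
      rintro q' ⟨hq', hq'r⟩
      have hpure := ((h q').mp hq').1
      have hle : q' ≤ q := hpure.le_of_le (min_isPrime hq) hqr hq'r hr.ne_top
      exact le_antisymm hle (hq.2 ⟨min_isPrime hq', bot_le⟩ hle)
end

section
/- (Cohen type theorem) Let A be a commutative ring in which every purely-maximal ideal is finitely generated. Then A is semi-Noetherian, i.e., every pure ideal of A is finitely generated. -/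
variable {A : Type*} [CommRing A]

/-- Cohen type theorem: if every purely-maximal ideal of `A` is finitely
generated, then every pure ideal of `A` is finitely generated (`A` is semi-Noetherian). -/
lemma exists_unit_of_pure_fg (I : Ideal A) (hI : I.IsPure) (hfg : I.FG) :
    ∃ e ∈ I, ∀ f ∈ I, f * (1 - e) = 0 := by
  classical
  obtain ⟨s, hs⟩ := hfg
  have key : ∀ t : Finset A, (↑t : Set A) ⊆ I → ∃ e ∈ I, ∀ f ∈ t, f * (1 - e) = 0 := by
    intro t
    induction t using Finset.induction with
    | empty => exact fun _ => ⟨0, I.zero_mem, by simp⟩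
    | @insert a t ha ih =>
      intro hsub
      obtain ⟨e, heI, he⟩ := ih (fun x hx => hsub (Finset.mem_insert_of_mem hx))
      obtain ⟨g, hgI, hg⟩ := hI a (hsub (Finset.mem_insert_self a t))
      refine ⟨e + g - e * g, I.sub_mem (I.add_mem heI hgI) (I.mul_mem_right g heI), ?_⟩
      intro f hf
      rcases Finset.mem_insert.1 hf with rfl | hf
      · linear_combination (1 - e) * hg
      · linear_combination (1 - g) * he f hf
  obtain ⟨e, heI, he⟩ := key s (by rw [← hs]; exact Ideal.subset_span)
  refine ⟨e, heI, ?_⟩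
  intro f hf
  rw [← hs] at hf
  refine Submodule.span_induction (fun x hx => he x hx) (by simp) ?_ ?_ hf
  · intro x y _ _ hx hy; linear_combination hx + hy
  · intro a x _ hx; rw [smul_eq_mul]; linear_combination a * hx

theorem semiNoetherian_of_purelyMaximal_fg
    (h : ∀ M : Ideal A, M.IsPurelyMaximal → M.FG) :
    ∀ I : Ideal A, I.IsPure → I.FG := by
  classical
  intro I hI
  by_contra hIfg
  set S : Set (Ideal A) := {J | J.IsPure ∧ ¬ J.FG} with hS
  have hIS : I ∈ S := ⟨hI, hIfg⟩
  have hchain : ∀ c ⊆ S, IsChain (· ≤ ·) c → ∀ y ∈ c, ∃ ub ∈ S, ∀ z ∈ c, z ≤ ub := by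
    intro c hcS hc y hy
    refine ⟨sSup c, ⟨?_, ?_⟩, fun z hz => le_sSup hz⟩
    · intro f hf
      obtain ⟨J, hJc, hfJ⟩ := (Submodule.mem_sSup_of_directed ⟨y, hy⟩ hc.directedOn).1 hf
      obtain ⟨g, hgJ, hg⟩ := (hcS hJc).1 f hfJ
      exact ⟨g, (le_sSup hJc) hgJ, hg⟩
    · rintro ⟨s, hs⟩
      have key : ∀ t : Finset A, (↑t : Set A) ⊆ (sSup c : Ideal A) → ∃ J ∈ c, (↑t : Set A) ⊆ J := by
        intro t
        induction t using Finset.induction with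
        | empty => exact fun _ => ⟨y, hy, by simp⟩
        | @insert a t ha ih =>
          intro hsub
          obtain ⟨J, hJc, hJ⟩ := ih (fun x hx => hsub (Finset.mem_insert_of_mem hx))
          obtain ⟨K, hKc, haK⟩ := (Submodule.mem_sSup_of_directed ⟨y, hy⟩ hc.directedOn).1
            (hsub (Finset.mem_insert_self a t))
          obtain ⟨L, hLc, hJL, hKL⟩ := hc.directedOn J hJc K hKc
          refine ⟨L, hLc, ?_⟩
          intro x hx
          rcases Finset.mem_insert.1 hx with rfl | hx
          · exact hKL haK
          · exact hJL (hJ hx)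
      obtain ⟨J, hJc, hJ⟩ := key s (by rw [← hs] at *; exact Ideal.subset_span)
      have heq : sSup c = J := le_antisymm (by rw [← hs]; exact Ideal.span_le.2 hJ) (le_sSup hJc)
      exact (hcS hJc).2 ⟨s, by rw [← heq, hs]⟩
  obtain ⟨M, hIM, hMS, hMmax⟩ := zorn_le_nonempty₀ S hchain I hIS
  have hMne : M ≠ ⊤ := by
    rintro rfl
    exact hMS.2 ⟨{1}, by simp [Ideal.span_singleton_one]⟩
  have hMpm : M.IsPurelyMaximal := by
    refine ⟨hMS.1, hMne, ?_⟩
    intro Q hQ hQne hMQ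
    by_contra hne
    have hQfg : Q.FG := by
      by_contra hQfg
      exact hne (le_antisymm hMQ (hMmax ⟨hQ, hQfg⟩ hMQ))
    obtain ⟨e, heQ, he⟩ := exists_unit_of_pure_fg Q hQ hQfg
    have hee : e * (1 - e) = 0 := he e heQ
    set M' : Ideal A := M ⊔ Ideal.span {1 - e} with hM'
    have h1e : (1 - e) ∈ M' := le_sup_right (α := Ideal A) (Ideal.subset_span rfl)
    have hMM' : M ≤ M' := le_sup_left
    have hmem : ∀ f ∈ M', ∃ m ∈ M, ∃ a : A, f = m + a * (1 - e) := by
      intro f hf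
      rw [hM', Submodule.mem_sup] at hf
      obtain ⟨m, hm, y, hy, rfl⟩ := hf
      obtain ⟨a, rfl⟩ := Ideal.mem_span_singleton'.1 hy
      exact ⟨m, hm, a, rfl⟩
    have hM'pure : M'.IsPure := by
      intro f hf
      obtain ⟨m, hm, a, rfl⟩ := hmem f hf
      obtain ⟨g, hgM, hg⟩ := hMS.1 m hm
      refine ⟨g + (1 - e), Ideal.add_mem _ (hMM' hgM) h1e, ?_⟩
      have hge : g * (1 - e) = 0 := he g (hMQ hgM)
      have hme : m * (1 - e) = 0 := he m (hMQ hm)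
      linear_combination hg - hme + a * hee - a * hge
    have hM'ne : M' ≠ ⊤ := by
      intro htop
      have h1 : (1 : A) ∈ M' := htop ▸ Submodule.mem_top
      obtain ⟨m, hm, a, hma⟩ := hmem 1 h1
      have heM : e ∈ M := by
        have hem : e = e * m := by linear_combination e * hma + a * hee
        rw [hem]; exact M.mul_mem_left e hm
      have hQM : Q ≤ M := fun f hf => by
        have hfe : f = f * e := by linear_combination he f hf
        rw [hfe]; exact M.mul_mem_left f heM
      exact hne (le_antisymm hMQ hQM)
    have hMltM' : M ≠ M' := by
      intro hMeq
      have h1eM : (1 - e) ∈ M := hMeq ▸ h1e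
      have h2 : (1 - e) * (1 - e) = 0 := he (1 - e) (hMQ h1eM)
      have he1 : e = 1 := by linear_combination - h2 - hee
      exact hQne (Ideal.eq_top_iff_one Q |>.2 (he1 ▸ heQ))
    have hM'fg : M'.FG := by
      by_contra hM'fg
      exact hMltM' (le_antisymm hMM' (hMmax ⟨hM'pure, hM'fg⟩ hMM'))
    obtain ⟨s', hs'⟩ := hM'fg
    have heMem : ∀ y ∈ M', e * y ∈ M := by
      intro y hy
      obtain ⟨m, hm, a, rfl⟩ := hmem y hy
      have hexp : e * (m + a * (1 - e)) = e * m + a * (e * (1 - e)) := by ring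
      rw [hexp, hee, mul_zero, add_zero]
      exact M.mul_mem_left e hm
    have hMfg : M.FG := by
      refine ⟨s'.image (fun x => e * x), le_antisymm ?_ ?_⟩
      · rw [Ideal.span_le]
        intro x hx
        simp only [Finset.coe_image, Set.mem_image, Finset.mem_coe] at hx
        obtain ⟨y, hy, rfl⟩ := hx
        exact heMem y (by rw [← hs']; exact Ideal.subset_span hy)
      · intro f hf
        have hfe : f = e * f := by linear_combination he f (hMQ hf)
        have hfM' : f ∈ Ideal.span (↑s' : Set A) := hs' ▸ hMM' hf
        have hspan : e * f ∈ Ideal.span (↑(s'.image (fun x => e * x)) : Set A) := by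
          refine Submodule.span_induction ?_ (by simp) ?_ ?_ hfM'
          · intro x hx
            exact Ideal.subset_span (by simpa using ⟨x, hx, rfl⟩)
          · intro x y _ _ hx hy
            rw [mul_add]; exact Ideal.add_mem _ hx hy
          · intro a x _ hx
            rw [smul_eq_mul, ← mul_assoc, mul_comm e a, mul_assoc]
            exact Ideal.mul_mem_left _ a hx
        rwa [hfe]
    exact hMS.2 hMfg
  exact hMS.2 (h M hMpm)
end
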